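/- arXiv:math/0302011 — 4 statements merged into one kernel-verified Lean document; each statement's English description precedes it below -/
import Mathlib

section
/- For every compact set K ⊆ ℍ^n, the ℋ_RSL(ℍ^n)-convex hull K̂ of K is contained in the real convex hull convexHull ℝ K of K. -/
noncomputable section

open scoped ComplexConjugate

/-- The first complex component of a quaternion `q = t + u·j`, identifying `ℂ` with the
real span of `1` and `i` inside the quaternions: `t = q.re + q.imI * I`. -/
def qt (q : Quaternion ℝ) : ℂ := ⟨q.re, q.imI⟩

/-- The second complex component of a quaternion `q = t + u·j`: `u = q.imJ + q.imK * I`. -/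
def qu (q : Quaternion ℝ) : ℂ := ⟨q.imJ, q.imK⟩

/-- The quaternion `t + u·j` built from two complex numbers. -/
def mkQ (t u : ℂ) : Quaternion ℝ := ⟨t.re, t.im, u.re, u.im⟩

/-- `f : ℍ^n → ℍ` is right superlinearly superdifferentiable (RSS) on `U`:
writing `f = f₁ + f₂·j` with `f₁ = qt ∘ f`, `f₂ = qu ∘ f`, and each coordinate
`z_k = t_k + u_k·j`, the component `f₁` is jointly holomorphic in `(t₁,…,t_n)` and
antiholomorphic in `(u₁,…,u_n)` (i.e. `(t, v) ↦ f₁` at `u_k = conj (v_k)` is jointly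
holomorphic), and `f₂` is jointly holomorphic in the `u`'s and antiholomorphic in the `t`'s. -/
def RSS {n : ℕ} (U : Set (Fin n → Quaternion ℝ))
    (f : (Fin n → Quaternion ℝ) → Quaternion ℝ) : Prop :=
  DifferentiableOn ℂ
    (fun p : (Fin n → ℂ) × (Fin n → ℂ) =>
      qt (f fun k => mkQ (p.1 k) (conj (p.2 k))))
    {p | (fun k => mkQ (p.1 k) (conj (p.2 k))) ∈ U} ∧
  DifferentiableOn ℂ
    (fun p : (Fin n → ℂ) × (Fin n → ℂ) =>
      qu (f fun k => mkQ (conj (p.1 k)) (p.2 k)))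
    {p | (fun k => mkQ (conj (p.1 k)) (p.2 k)) ∈ U}

/-- The `ℋ_RSL(ℍ^n)`-convex hull of a compact set `K ⊆ ℍ^n`:
all `z` with `‖f z‖ ≤ sup_{ζ ∈ K} ‖f ζ‖` for every `f` RSS on all of `ℍ^n`. -/
def rslHull {n : ℕ} (K : Set (Fin n → Quaternion ℝ)) : Set (Fin n → Quaternion ℝ) :=
  {z | ∀ f : (Fin n → Quaternion ℝ) → Quaternion ℝ,
    RSS Set.univ f → ‖f z‖ ≤ ⨆ ζ ∈ K, ‖f ζ‖}

lemma sum_pad {α β : Type*} [Fintype α] [AddCommMonoid β] {d : ℕ}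
    (hcard : Fintype.card α ≤ d) (G : α → β) :
    (∑ i : Fin d, if h : (i : ℕ) < Fintype.card α
      then G ((Fintype.equivFin α).symm ⟨i, h⟩) else 0) = ∑ y, G y := by
  classical
  rw [Fin.sum_univ_eq_sum_range
    (fun m => if h : m < Fintype.card α then G ((Fintype.equivFin α).symm ⟨m, h⟩) else 0) d]
  rw [← Finset.sum_subset (Finset.range_subset_range.mpr hcard)
    (fun m _ hm => dif_neg (by simpa using hm))]
  rw [← Fin.sum_univ_eq_sum_range]
  rw [Finset.sum_congr rfl (fun i _ => dif_pos i.isLt)]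
  rw [show (fun i : Fin (Fintype.card α) =>
      G ((Fintype.equivFin α).symm ⟨(i : ℕ), i.isLt⟩)) =
      fun i => G ((Fintype.equivFin α).symm i) from funext fun i => by rw [Fin.eta]]
  exact Equiv.sum_comp (Fintype.equivFin α).symm G

lemma isCompact_convexHull_fd {E : Type*} [NormedAddCommGroup E] [NormedSpace ℝ E]
    [FiniteDimensional ℝ E] {K : Set E} (hK : IsCompact K) :
    IsCompact (convexHull ℝ K) := by
  classical
  set d := Module.finrank ℝ E + 1 with hd
  have himg : convexHull ℝ K =
      (fun p : (Fin d → ℝ) × (Fin d → E) => ∑ i, p.1 i • p.2 i) ''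
        (stdSimplex ℝ (Fin d) ×ˢ Set.univ.pi fun _ => K) := by
    apply Set.Subset.antisymm
    · intro x hx
      rw [convexHull_eq_union] at hx
      simp only [Set.mem_iUnion] at hx
      obtain ⟨t, ht, hAI, hxt⟩ := hx
      have hcard : Fintype.card ↥t ≤ d := by
        calc Fintype.card ↥t
            ≤ Module.finrank ℝ (vectorSpan ℝ (Set.range ((↑) : t → E))) + 1 :=
              hAI.card_le_finrank_succ
          _ ≤ d := by
              rw [hd]
              exact Nat.add_le_add_right (Submodule.finrank_le _) 1
      have htne : t.Nonempty := by
        rcases Finset.eq_empty_or_nonempty t with h | h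
        · subst h; simp at hxt
        · exact h
      obtain ⟨y0, hy0⟩ := htne
      rw [Finset.convexHull_eq] at hxt
      obtain ⟨w, hw0, hw1, hwx⟩ := hxt
      set σ := Fintype.equivFin ↥t with hσ
      refine ⟨(fun i => if h : (i : ℕ) < Fintype.card ↥t then w ((σ.symm ⟨i, h⟩ : t) : E) else 0,
               fun i => if h : (i : ℕ) < Fintype.card ↥t then ((σ.symm ⟨i, h⟩ : t) : E) else y0),
               ⟨⟨fun i => ?_, ?_⟩, fun i _ => ?_⟩, ?_⟩
      · dsimp only
        split_ifs with h
        · exact hw0 _ (σ.symm ⟨i, h⟩).2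
        · exact le_rfl
      · dsimp only
        rw [sum_pad hcard (fun y : t => w (y : E))]
        rw [← Finset.sum_attach t w] at hw1
        exact hw1
      · dsimp only
        split_ifs with h
        · exact ht (σ.symm ⟨i, h⟩).2
        · exact ht hy0
      · dsimp only
        have hsum : (∑ i : Fin d,
            (if h : (i : ℕ) < Fintype.card ↥t then w ((σ.symm ⟨i, h⟩ : t) : E) else 0) •
            (if h : (i : ℕ) < Fintype.card ↥t then ((σ.symm ⟨i, h⟩ : t) : E) else y0))
            = ∑ y : t, w (y : E) • (y : E) := by
          rw [← sum_pad hcard (fun y : t => w (y : E) • (y : E))]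
          refine Finset.sum_congr rfl fun i _ => ?_
          split_ifs with h
          · rfl
          · rw [zero_smul]
        rw [hsum, ← hwx, Finset.centerMass_eq_of_sum_1 _ _ hw1]
        simp [Finset.sum_attach t (fun y => w y • y)]
    · rintro x ⟨⟨wv, xv⟩, ⟨hw, hx⟩, rfl⟩
      exact mem_convexHull_of_exists_fintype wv xv (fun i => hw.1 i) hw.2
        (fun i => hx i (Set.mem_univ i)) rfl
  rw [himg]
  exact ((isCompact_stdSimplex ℝ (Fin d)).prod (isCompact_univ_pi fun _ => hK)).image
    (continuous_finset_sum _ fun i _ =>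
      ((continuous_apply i).comp continuous_fst).smul ((continuous_apply i).comp continuous_snd))

lemma norm_mkQ (t : ℂ) : ‖mkQ t 0‖ = ‖t‖ := by
  rw [norm_eq_sqrt_real_inner, Quaternion.inner_self]
  rw [show Quaternion.normSq (mkQ t 0) = t.re ^ 2 + t.im ^ 2 by
    rw [Quaternion.normSq_def']; simp [mkQ]]
  rw [Complex.norm_def, Complex.normSq_apply]
  ring_nf

lemma quat_decomp (q : Quaternion ℝ) :
    q = q.re • (⟨1,0,0,0⟩ : Quaternion ℝ) + q.imI • (⟨0,1,0,0⟩ : Quaternion ℝ)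
      + q.imJ • (⟨0,0,1,0⟩ : Quaternion ℝ) + q.imK • (⟨0,0,0,1⟩ : Quaternion ℝ) := by
  ext <;> simp

/-- Proposition 2.18 (part II): for each compact `K ⊆ ℍ^n`, the `ℋ_RSL(ℍ^n)`-convex hull
of `K` is contained in the real convex hull of `K`. -/
theorem rslHull_subset_convexHull {n : ℕ} (K : Set (Fin n → Quaternion ℝ))
    (hK : IsCompact K) : rslHull K ⊆ convexHull ℝ K := by
  intro z hz
  by_contra hzK
  obtain ⟨f, u, hfu, huz⟩ :=
    geometric_hahn_banach_closed_point (convex_convexHull ℝ K)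
      (isCompact_convexHull_fd hK).isClosed hzK
  set a : Fin n → ℂ := fun k =>
    ⟨f (Pi.single k (⟨1,0,0,0⟩ : Quaternion ℝ)),
      -f (Pi.single k (⟨0,1,0,0⟩ : Quaternion ℝ))⟩ with ha
  set b : Fin n → ℂ := fun k =>
    ⟨f (Pi.single k (⟨0,0,1,0⟩ : Quaternion ℝ)),
      f (Pi.single k (⟨0,0,0,1⟩ : Quaternion ℝ))⟩ with hb
  set g : (Fin n → Quaternion ℝ) → ℂ :=
    fun w => ∑ k, (a k * qt (w k) + b k * conj (qu (w k))) with hgdef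
  have hg_re : ∀ w, (g w).re = f w := by
    intro w
    have hw : f w = ∑ k, f (Pi.single k (w k)) := by
      rw [← map_sum]
      congr 1
      exact (Finset.univ_sum_single w).symm
    rw [hw, hgdef]
    simp only [Complex.re_sum]
    refine Finset.sum_congr rfl fun k _ => ?_
    have hq : (Pi.single k (w k) : Fin n → Quaternion ℝ) =
        (w k).re • (Pi.single k (⟨1,0,0,0⟩ : Quaternion ℝ) : Fin n → Quaternion ℝ)
        + (w k).imI • (Pi.single k (⟨0,1,0,0⟩ : Quaternion ℝ) : Fin n → Quaternion ℝ)
        + (w k).imJ • (Pi.single k (⟨0,0,1,0⟩ : Quaternion ℝ) : Fin n → Quaternion ℝ)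
        + (w k).imK • (Pi.single k (⟨0,0,0,1⟩ : Quaternion ℝ) : Fin n → Quaternion ℝ) := by
      funext i
      by_cases h : i = k
      · subst h
        ext <;> simp [Pi.single, Function.update] <;>
          simp [HSMul.hSMul, SMul.smul, Quaternion.instSMul._aux_1] <;>
          simp only [show ∀ a b : ℝ, Mul.mul a b = a * b from fun _ _ => rfl] <;> ring
      · ext <;> simp [Pi.single, Function.update, h]
    rw [hq]
    simp only [map_add, map_smul, smul_eq_mul]
    simp only [ha, hb, qt, qu, Complex.add_re, Complex.mul_re, Complex.conj_re,
      Complex.conj_im]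
    ring
  set F : (Fin n → Quaternion ℝ) → Quaternion ℝ :=
    fun w => mkQ (Complex.exp (g w)) 0 with hFdef
  have hFnorm : ∀ w, ‖F w‖ = Real.exp (f w) := by
    intro w
    rw [hFdef, norm_mkQ, Complex.norm_exp, hg_re]
  have hRSS : RSS Set.univ F := by
    constructor
    · have heq : (fun p : (Fin n → ℂ) × (Fin n → ℂ) =>
          qt (F fun k => mkQ (p.1 k) (conj (p.2 k)))) =
          fun p => Complex.exp (∑ k, (a k * p.1 k + b k * p.2 k)) := by
        funext p
        show Complex.exp (g fun k => mkQ (p.1 k) (conj (p.2 k))) = _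
        congr 1
        rw [hgdef]
        refine Finset.sum_congr rfl fun k _ => ?_
        show a k * qt (mkQ (p.1 k) (conj (p.2 k)))
          + b k * conj (qu (mkQ (p.1 k) (conj (p.2 k)))) = _
        rw [show qt (mkQ (p.1 k) (conj (p.2 k))) = p.1 k from rfl,
          show qu (mkQ (p.1 k) (conj (p.2 k))) = conj (p.2 k) from rfl,
          Complex.conj_conj]
      rw [heq]
      apply Differentiable.differentiableOn
      apply Differentiable.cexp
      apply Differentiable.fun_sum
      intro k _
      have h1 : Differentiable ℂ (fun p : (Fin n → ℂ) × (Fin n → ℂ) => p.1 k) :=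
        ((ContinuousLinearMap.proj (R := ℂ) (φ := fun _ : Fin n => ℂ) k).comp
          (ContinuousLinearMap.fst ℂ (Fin n → ℂ) (Fin n → ℂ))).differentiable
      have h2 : Differentiable ℂ (fun p : (Fin n → ℂ) × (Fin n → ℂ) => p.2 k) :=
        ((ContinuousLinearMap.proj (R := ℂ) (φ := fun _ : Fin n => ℂ) k).comp
          (ContinuousLinearMap.snd ℂ (Fin n → ℂ) (Fin n → ℂ))).differentiable
      exact ((differentiable_const _).mul h1).add ((differentiable_const _).mul h2)
    · have heq : (fun p : (Fin n → ℂ) × (Fin n → ℂ) =>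
          qu (F fun k => mkQ (conj (p.1 k)) (p.2 k))) = fun _ => (0 : ℂ) := by
        funext p
        show qu (mkQ _ 0) = 0
        rfl
      rw [heq]
      exact (differentiable_const _).differentiableOn
  have hle := hz F hRSS
  have hsup : (⨆ ζ ∈ K, ‖F ζ‖) ≤ Real.exp u := by
    apply Real.iSup_le _ (Real.exp_pos u).le
    intro ζ
    apply Real.iSup_le _ (Real.exp_pos u).le
    intro hζ
    rw [hFnorm]
    exact Real.exp_le_exp.mpr (hfu ζ (subset_convexHull ℝ K hζ)).le
  rw [hFnorm] at hle
  have := Real.exp_lt_exp.mpr huz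
  linarith
end
end

section
/- For every compact set K ⊆ ℍ^n, the ℋ_RSL(ℍ^n)-convex hull K̂ of K is a compact subset of ℍ^n. -/
noncomputable section

open scoped ComplexConjugate

def qi : Quaternion ℝ := ⟨0,1,0,0⟩
def qj : Quaternion ℝ := ⟨0,0,1,0⟩
def qk : Quaternion ℝ := ⟨0,0,0,1⟩

lemma mkQ_qt_qu (q : Quaternion ℝ) : mkQ (qt q) (qu q) = q := rfl

lemma qt_mkQ (t u : ℂ) : qt (mkQ t u) = t := rfl
lemma qu_mkQ (t u : ℂ) : qu (mkQ t u) = u := rfl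

lemma qt_eq (q : Quaternion ℝ) : qt q = (q.re : ℂ) + q.imI * Complex.I := by
  apply Complex.ext <;> simp [qt]

lemma qu_eq (q : Quaternion ℝ) : qu q = (q.imJ : ℂ) + q.imK * Complex.I := by
  apply Complex.ext <;> simp [qu]

lemma continuous_qt : Continuous qt := by
  simp only [funext qt_eq]
  exact (Complex.continuous_ofReal.comp Quaternion.continuous_re).add
    ((Complex.continuous_ofReal.comp Quaternion.continuous_imI).mul continuous_const)

lemma continuous_qu : Continuous qu := by
  simp only [funext qu_eq]
  exact (Complex.continuous_ofReal.comp Quaternion.continuous_imJ).add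
    ((Complex.continuous_ofReal.comp Quaternion.continuous_imK).mul continuous_const)

lemma mkQ_eq (t u : ℂ) : mkQ t u = t.re • (1 : Quaternion ℝ) + t.im • qi + u.re • qj + u.im • qk := by
  ext <;> simp [mkQ, Quaternion.re_smul, Quaternion.re_one, Quaternion.imI_one, Quaternion.imJ_one, Quaternion.imK_one] <;> simp [qi, qj, qk]

lemma continuous_mkQ : Continuous fun p : ℂ × ℂ => mkQ p.1 p.2 := by
  simp only [mkQ_eq]; fun_prop

lemma RSS.continuous {n : ℕ} {f : (Fin n → Quaternion ℝ) → Quaternion ℝ}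
    (hf : RSS Set.univ f) : Continuous f := by
  have hset1 : {p : (Fin n → ℂ) × (Fin n → ℂ) |
      (fun k => mkQ (p.1 k) (conj (p.2 k))) ∈ (Set.univ : Set (Fin n → Quaternion ℝ))} = Set.univ := by
    ext p; simp
  have hset2 : {p : (Fin n → ℂ) × (Fin n → ℂ) |
      (fun k => mkQ (conj (p.1 k)) (p.2 k)) ∈ (Set.univ : Set (Fin n → Quaternion ℝ))} = Set.univ := by
    ext p; simp
  have h1 : Continuous (fun p : (Fin n → ℂ) × (Fin n → ℂ) =>
      qt (f fun k => mkQ (p.1 k) (conj (p.2 k)))) := by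
    have := hf.1; rw [hset1, differentiableOn_univ] at this
    exact this.continuous
  have h2 : Continuous (fun p : (Fin n → ℂ) × (Fin n → ℂ) =>
      qu (f fun k => mkQ (conj (p.1 k)) (p.2 k))) := by
    have := hf.2; rw [hset2, differentiableOn_univ] at this
    exact this.continuous
  have hp1 : Continuous fun z : Fin n → Quaternion ℝ =>
      ((fun k => qt (z k), fun k => conj (qu (z k))) : (Fin n → ℂ) × (Fin n → ℂ)) :=
    Continuous.prodMk
      (continuous_pi fun k => continuous_qt.comp (continuous_apply k))
      (continuous_pi fun k => continuous_star.comp (continuous_qu.comp (continuous_apply k)))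
  have hp2 : Continuous fun z : Fin n → Quaternion ℝ =>
      ((fun k => conj (qt (z k)), fun k => qu (z k)) : (Fin n → ℂ) × (Fin n → ℂ)) :=
    Continuous.prodMk
      (continuous_pi fun k => continuous_star.comp (continuous_qt.comp (continuous_apply k)))
      (continuous_pi fun k => continuous_qu.comp (continuous_apply k))
  have hc1 : Continuous fun z => qt (f z) := by
    have := h1.comp hp1
    simpa only [Function.comp_def, Complex.conj_conj, mkQ_qt_qu] using this
  have hc2 : Continuous fun z => qu (f z) := by
    have := h2.comp hp2
    simpa only [Function.comp_def, Complex.conj_conj, mkQ_qt_qu] using this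
  have : f = fun z => mkQ (qt (f z)) (qu (f z)) := by
    funext z; rw [mkQ_qt_qu]
  rw [this]
  exact continuous_mkQ.comp (hc1.prodMk hc2)

lemma RSS_coord {n : ℕ} (k : Fin n) : RSS Set.univ (fun z : Fin n → Quaternion ℝ => z k) := by
  constructor
  · simp only [qt_mkQ]
    exact (((ContinuousLinearMap.proj k).comp
      (ContinuousLinearMap.fst ℂ (Fin n → ℂ) (Fin n → ℂ))).differentiable).differentiableOn
  · simp only [qu_mkQ]
    exact (((ContinuousLinearMap.proj k).comp
      (ContinuousLinearMap.snd ℂ (Fin n → ℂ) (Fin n → ℂ))).differentiable).differentiableOn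

/-- Note 2.18.1 (quaternion version of Corollary 1.3.4 of Henkin–Leiterer): for each
compact `K ⊆ ℍ^n`, the `ℋ_RSL(ℍ^n)`-convex hull of `K` is compact. -/
theorem isCompact_rslHull {n : ℕ} (K : Set (Fin n → Quaternion ℝ))
    (hK : IsCompact K) : IsCompact (rslHull K) := by
  rw [Metric.isCompact_iff_isClosed_bounded]
  constructor
  · have : rslHull K = ⋂ (f : (Fin n → Quaternion ℝ) → Quaternion ℝ),
        ⋂ (_ : RSS Set.univ f), {z | ‖f z‖ ≤ ⨆ ζ ∈ K, ‖f ζ‖} := by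
      ext z; simp [rslHull]
    rw [this]
    exact isClosed_iInter fun f => isClosed_iInter fun hf =>
      isClosed_le (continuous_norm.comp hf.continuous) continuous_const
  · obtain ⟨M, hM⟩ := hK.isBounded.exists_norm_le
    set M' := max M 0 with hM'
    have hM'0 : 0 ≤ M' := le_max_right _ _
    have : rslHull K ⊆ Metric.closedBall 0 M' := by
      intro z hz
      rw [Metric.mem_closedBall, dist_zero_right]
      rw [pi_norm_le_iff_of_nonneg hM'0]
      intro k
      refine (hz _ (RSS_coord k)).trans ?_
      refine Real.iSup_le (fun ζ => Real.iSup_le (fun hζ => ?_) hM'0) hM'0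
      exact (norm_le_pi_norm ζ k).trans ((hM ζ hζ).trans (le_max_left _ _))
    exact Metric.isBounded_closedBall.subset this
end
end

section
/- Let W ⊆ ℍ^n be an open convex set and let K ⊆ W be compact. Then the ℋ_RSL(W)-convex hull K̂_W := {z ∈ W : ‖f(z)‖ ≤ sup_{ζ ∈ K} ‖f(ζ)‖ for every function f : W → ℍ that is RSS on W} is a compact subset of W; in other words, every open convex subset of ℍ^n is ℋ_RSL-holomorphically convex. -/
noncomputable section

open scoped ComplexConjugate

/-- The `ℋ_RSL(W)`-convex hull of a compact set `K ⊆ W`: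
all `z ∈ W` with `‖f z‖ ≤ sup_{ζ ∈ K} ‖f ζ‖` for every `f` RSS on `W`. -/
def rslHullIn {n : ℕ} (W K : Set (Fin n → Quaternion ℝ)) : Set (Fin n → Quaternion ℝ) :=
  {z | z ∈ W ∧ ∀ f : (Fin n → Quaternion ℝ) → Quaternion ℝ,
    RSS W f → ‖f z‖ ≤ ⨆ ζ ∈ K, ‖f ζ‖}

namespace RSSAux

lemma qt_mkQ (t u : ℂ) : qt (mkQ t u) = t := rfl
lemma qu_mkQ (t u : ℂ) : qu (mkQ t u) = u := rfl
lemma mkQ_qt_qu (q : Quaternion ℝ) : mkQ (qt q) (qu q) = q := rfl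

lemma norm_mkQ (t : ℂ) : ‖mkQ t 0‖ = ‖t‖ := by
  have h1 : ‖mkQ t 0‖ * ‖mkQ t 0‖ = ‖t‖ * ‖t‖ := by
    rw [← Quaternion.normSq_eq_norm_mul_self, Complex.norm_mul_self_eq_normSq, Complex.normSq_apply]
    rw [Quaternion.normSq_def']; simp [mkQ, sq]
  exact mul_self_inj (norm_nonneg _) (norm_nonneg _) |>.mp h1

lemma continuous_qt : Continuous qt := by
  have : qt = fun q : Quaternion ℝ => (q.re : ℂ) + q.imI * Complex.I := by
    funext q; apply Complex.ext <;> simp [qt]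
  rw [this]
  exact (Complex.continuous_ofReal.comp Quaternion.continuous_re).add
    ((Complex.continuous_ofReal.comp Quaternion.continuous_imI).mul continuous_const)

lemma continuous_qu : Continuous qu := by
  have : qu = fun q : Quaternion ℝ => (q.imJ : ℂ) + q.imK * Complex.I := by
    funext q; apply Complex.ext <;> simp [qu]
  rw [this]
  exact (Complex.continuous_ofReal.comp Quaternion.continuous_imJ).add
    ((Complex.continuous_ofReal.comp Quaternion.continuous_imK).mul continuous_const)

lemma quat_decomp (q : Quaternion ℝ) :
    q = q.re • (⟨1,0,0,0⟩ : Quaternion ℝ) + q.imI • (⟨0,1,0,0⟩ : Quaternion ℝ)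
      + q.imJ • (⟨0,0,1,0⟩ : Quaternion ℝ) + q.imK • (⟨0,0,0,1⟩ : Quaternion ℝ) := by
  ext <;> simp

lemma continuous_mkQ : Continuous (fun p : ℂ × ℂ => mkQ p.1 p.2) := by
  have : (fun p : ℂ × ℂ => mkQ p.1 p.2) = fun p : ℂ × ℂ =>
      p.1.re • (⟨1,0,0,0⟩ : Quaternion ℝ) + p.1.im • (⟨0,1,0,0⟩ : Quaternion ℝ)
        + p.2.re • (⟨0,0,1,0⟩ : Quaternion ℝ) + p.2.im • (⟨0,0,0,1⟩ : Quaternion ℝ) := by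
    funext p; ext <;> simp [mkQ]
  rw [this]
  exact ((((Complex.continuous_re.comp continuous_fst).smul continuous_const).add
    ((Complex.continuous_im.comp continuous_fst).smul continuous_const)).add
    ((Complex.continuous_re.comp continuous_snd).smul continuous_const)).add
    ((Complex.continuous_im.comp continuous_snd).smul continuous_const)

/-- Any RSS function on `U` is continuous on `U`. -/
lemma RSS.continuousOn {n : ℕ} {U : Set (Fin n → Quaternion ℝ)}
    {f : (Fin n → Quaternion ℝ) → Quaternion ℝ} (hf : RSS U f) : ContinuousOn f U := by
  obtain ⟨h1, h2⟩ := hf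
  set Φinv : (Fin n → Quaternion ℝ) → (Fin n → ℂ) × (Fin n → ℂ) :=
    fun z => (fun k => qt (z k), fun k => conj (qu (z k))) with hΦinv
  set Ψinv : (Fin n → Quaternion ℝ) → (Fin n → ℂ) × (Fin n → ℂ) :=
    fun z => (fun k => conj (qt (z k)), fun k => qu (z k)) with hΨinv
  have hΦc : Continuous Φinv := by
    apply Continuous.prodMk <;> apply continuous_pi <;> intro k
    · exact continuous_qt.comp (continuous_apply k)
    · exact Complex.continuous_conj.comp (continuous_qu.comp (continuous_apply k))
  have hΨc : Continuous Ψinv := by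
    apply Continuous.prodMk <;> apply continuous_pi <;> intro k
    · exact Complex.continuous_conj.comp (continuous_qt.comp (continuous_apply k))
    · exact continuous_qu.comp (continuous_apply k)
  have hΦid : ∀ z : Fin n → Quaternion ℝ,
      (fun k => mkQ ((Φinv z).1 k) (conj ((Φinv z).2 k))) = z := by
    intro z; funext k; simp [hΦinv, mkQ_qt_qu]
  have hΨid : ∀ z : Fin n → Quaternion ℝ,
      (fun k => mkQ (conj ((Ψinv z).1 k)) ((Ψinv z).2 k)) = z := by
    intro z; funext k; simp [hΨinv, mkQ_qt_qu]
  have hqt : ContinuousOn (fun z => qt (f z)) U := by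
    have := (h1.continuousOn.comp hΦc.continuousOn
      (fun z hz => by simp only [Set.mem_setOf_eq, hΦid z]; exact hz))
    refine this.congr fun z hz => ?_
    simp only [Function.comp_apply, hΦid z]
  have hqu : ContinuousOn (fun z => qu (f z)) U := by
    have := (h2.continuousOn.comp hΨc.continuousOn
      (fun z hz => by simp only [Set.mem_setOf_eq, hΨid z]; exact hz))
    refine this.congr fun z hz => ?_
    simp only [Function.comp_apply, hΨid z]
  have : ContinuousOn (fun z => mkQ (qt (f z)) (qu (f z))) U :=
    continuous_mkQ.comp_continuousOn (hqt.prodMk hqu)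
  simpa only [mkQ_qt_qu] using this

/-- For any continuous real-linear functional `ℓ` on `ℍ^n` there is an RSS function on any `U`
whose norm is `exp (ℓ z)` everywhere. -/
lemma exists_rss_exp {n : ℕ} (U : Set (Fin n → Quaternion ℝ))
    (ℓ : ((Fin n → Quaternion ℝ) →L[ℝ] ℝ)) :
    ∃ F : (Fin n → Quaternion ℝ) → Quaternion ℝ, RSS U F ∧
      ∀ z, ‖F z‖ = Real.exp (ℓ z) := by
  set a : Fin n → ℂ := fun k =>
    ⟨ℓ (Pi.single k (⟨1,0,0,0⟩ : Quaternion ℝ)), -ℓ (Pi.single k (⟨0,1,0,0⟩ : Quaternion ℝ))⟩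
  set b : Fin n → ℂ := fun k =>
    ⟨ℓ (Pi.single k (⟨0,0,1,0⟩ : Quaternion ℝ)), ℓ (Pi.single k (⟨0,0,0,1⟩ : Quaternion ℝ))⟩
  set g : (Fin n → Quaternion ℝ) → ℂ :=
    fun z => ∑ k, (a k * qt (z k) + b k * conj (qu (z k))) with hg
  have hgre : ∀ z, (g z).re = ℓ z := by
    intro z
    have hz : ℓ z = ∑ k, ℓ (Pi.single k (z k)) := by
      rw [← map_sum, Finset.univ_sum_single]
    have hsingle : ∀ k, ℓ (Pi.single k (z k)) =
        (z k).re * ℓ (Pi.single k (⟨1,0,0,0⟩ : Quaternion ℝ))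
        + (z k).imI * ℓ (Pi.single k (⟨0,1,0,0⟩ : Quaternion ℝ))
        + (z k).imJ * ℓ (Pi.single k (⟨0,0,1,0⟩ : Quaternion ℝ))
        + (z k).imK * ℓ (Pi.single k (⟨0,0,0,1⟩ : Quaternion ℝ)) := by
      intro k
      conv_lhs => rw [quat_decomp (z k)]
      erw [Pi.single_add (f := fun _ => Quaternion ℝ), Pi.single_add (f := fun _ => Quaternion ℝ), Pi.single_add (f := fun _ => Quaternion ℝ),
        Pi.single_smul (f := fun _ => Quaternion ℝ), Pi.single_smul (f := fun _ => Quaternion ℝ), Pi.single_smul (f := fun _ => Quaternion ℝ), Pi.single_smul (f := fun _ => Quaternion ℝ)]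
      simp [map_add, map_smul]
    rw [hz, hg]
    rw [Complex.re_sum]
    refine Finset.sum_congr rfl fun k _ => ?_
    rw [hsingle k]
    simp only [Complex.add_re, Complex.mul_re, a, b, qt, qu, Complex.conj_re, Complex.conj_im]
    simp
    ring
  refine ⟨fun z => mkQ (Complex.exp (g z)) 0, ⟨?_, ?_⟩, ?_⟩
  · have heq : (fun p : (Fin n → ℂ) × (Fin n → ℂ) =>
        qt ((fun z => mkQ (Complex.exp (g z)) 0) fun k => mkQ (p.1 k) (conj (p.2 k)))) =
        fun p => Complex.exp (∑ k, (a k * p.1 k + b k * p.2 k)) := by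
      funext p
      simp only [qt_mkQ, hg, qu_mkQ, Complex.conj_conj]
    rw [heq]
    have hlin : Differentiable ℂ (fun p : (Fin n → ℂ) × (Fin n → ℂ) =>
        ∑ k, (a k * p.1 k + b k * p.2 k)) := by fun_prop
    exact hlin.cexp.differentiableOn
  · have heq : (fun p : (Fin n → ℂ) × (Fin n → ℂ) =>
        qu ((fun z => mkQ (Complex.exp (g z)) 0) fun k => mkQ (conj (p.1 k)) (p.2 k))) =
        fun _ => (0 : ℂ) := by
      funext p; simp only [qu_mkQ]
    rw [heq]
    exact (differentiable_const _).differentiableOn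
  · intro z
    rw [norm_mkQ, Complex.norm_exp, hgre]

end RSSAux

open scoped Pointwise in
open RSSAux in
/-- Note 2.18.1 (quaternion `ℋ_RSL`-version of Henkin–Leiterer Corollary 1.3.6/Theorem 1.3.7):
every open convex subset `W` of `ℍ^n` is `ℋ_RSL`-holomorphically convex, i.e. for each compact
`K ⊆ W` the `ℋ_RSL(W)`-convex hull of `K` is a compact subset of `W`. -/
theorem isCompact_rslHullIn_of_convex {n : ℕ} (W : Set (Fin n → Quaternion ℝ))
    (hWopen : IsOpen W) (hWconv : Convex ℝ W)
    (K : Set (Fin n → Quaternion ℝ)) (hK : IsCompact K) (hKW : K ⊆ W) :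
    IsCompact (rslHullIn W K) ∧ rslHullIn W K ⊆ W := by
  have hsubW : rslHullIn W K ⊆ W := fun z hz => hz.1
  -- choose ε > 0 with thickening ε K ⊆ W
  obtain ⟨ε, hε, hthick⟩ := hK.exists_thickening_subset_open hWopen hKW
  -- the compact convex "security" set C
  set C : Set (Fin n → Quaternion ℝ) :=
    Metric.cthickening (ε / 2) (convexHull ℝ K) with hC
  have hCconv : Convex ℝ C := (convex_convexHull ℝ K).cthickening _
  have hCclosed : IsClosed C := Metric.isClosed_cthickening
  have hCcompact : IsCompact C :=
    Metric.isCompact_of_isClosed_isBounded hCclosed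
      ((isBounded_convexHull.mpr hK.isBounded).cthickening)
  have hCW : C ⊆ W := by
    have h1 : C ⊆ Metric.thickening ε (convexHull ℝ K) :=
      Metric.cthickening_subset_thickening' hε (by linarith) _
    refine h1.trans ?_
    intro x hx
    obtain ⟨y, hy, hxy⟩ := Metric.mem_thickening_iff.mp hx
    -- translate K by x - y
    have hmem : x ∈ (convexHull ℝ K + ({x - y} : Set (Fin n → Quaternion ℝ)) : Set (Fin n → Quaternion ℝ)) := by
      rw [Set.add_singleton]
      exact ⟨y, hy, by show y + (x - y) = x; rw [add_sub_cancel]⟩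
    rw [← convexHull_singleton (𝕜 := ℝ) (x - y), ← convexHull_add] at hmem
    have hKv : K + ({x - y} : Set (Fin n → Quaternion ℝ)) ⊆ W := by
      rintro w ⟨k, hk, v, hv, rfl⟩
      rcases Set.mem_singleton_iff.mp hv with rfl
      apply hthick
      rw [Metric.mem_thickening_iff]
      exact ⟨k, hk, by
        have : dist (k + (x - y)) k = dist x y := by
          rw [dist_eq_norm, dist_eq_norm]; congr 1; abel
        rw [this]; exact hxy⟩
    have := convexHull_mono hKv hmem
    rwa [hWconv.convexHull_eq] at this
  -- the hull is contained in C (separation + exp-of-linear RSS functions)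
  have hsubC : rslHullIn W K ⊆ C := by
    intro z hz
    by_contra hzC
    obtain ⟨ℓ, u, hu1, hu2⟩ := geometric_hahn_banach_closed_point hCconv hCclosed hzC
    obtain ⟨F, hFrss, hFnorm⟩ := exists_rss_exp W ℓ
    have hle := hz.2 F hFrss
    have hKC : K ⊆ C :=
      (subset_convexHull ℝ K).trans (Metric.self_subset_cthickening _)
    have hsup : (⨆ ζ ∈ K, ‖F ζ‖) ≤ Real.exp u := by
      refine Real.iSup_le (fun ζ => Real.iSup_le (fun hζ => ?_) (Real.exp_nonneg u))
        (Real.exp_nonneg u)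
      rw [hFnorm]
      exact Real.exp_le_exp.mpr (le_of_lt (hu1 ζ (hKC hζ)))
    rw [hFnorm] at hle
    have : Real.exp (ℓ z) ≤ Real.exp u := le_trans hle hsup
    have := Real.exp_le_exp.mp this
    linarith
  -- the hull is closed
  have hclosed : IsClosed (rslHullIn W K) := by
    refine isClosed_of_closure_subset fun z hzc => ?_
    have hzC : z ∈ C := by
      have : closure (rslHullIn W K) ⊆ C := hCclosed.closure_subset_iff.mpr hsubC
      exact this hzc
    have hzW : z ∈ W := hCW hzC
    haveI hne : (nhdsWithin z (rslHullIn W K)).NeBot :=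
      mem_closure_iff_nhdsWithin_neBot.mp hzc
    refine ⟨hzW, fun f hf => ?_⟩
    have hcont : ContinuousWithinAt (fun w => ‖f w‖) (rslHullIn W K) z :=
      ((RSSAux.RSS.continuousOn hf).norm z hzW).mono hsubW
    refine le_of_tendsto hcont.tendsto ?_
    filter_upwards [self_mem_nhdsWithin] with w hw
    exact hw.2 f hf
  exact ⟨hCcompact.of_isClosed_subset hclosed hsubC, hsubW⟩
end
end

section
/- Let ρ : ℍ^n → ℝ be twice continuously differentiable and strongly convex with constant ε₀ > 0, and set U := {z ∈ ℍ^n : ρ(z) < 0}. Then v_ρ is a quaternion boundary distinguishing map for U: for every ζ in the topological frontier of U and every z ∈ U, the quaternion ⟨v_ρ(ζ); ζ − z⟩ is nonzero; in fact its real part is strictly positive. -/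
noncomputable section

/-- The canonical quaternion scalar product on `ℍ^n`: `⟨a; b⟩ = ∑ l, star (a l) * b l`.
Its real part is the standard real (Euclidean) inner product of `a` and `b` in `ℝ^{4n}`. -/
def qip {n : ℕ} (a b : Fin n → Quaternion ℝ) : Quaternion ℝ :=
  ∑ l, star (a l) * b l

/-- Lemma 3.9: let `ρ : ℍ^n → ℝ` be a `C²` function which is strongly convex with constant
`ε₀ > 0` (i.e. `D²ρ(x)(h,h) ≥ ε₀‖h‖²`, with `‖h‖² = ∑ l, ‖h l‖²` the Euclidean norm of
`ℝ^{4n}`), let `U = {z : ρ z < 0}`, and let `v_ρ` be the gradient of `ρ`, i.e.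
`Re⟨v_ρ(ζ); h⟩ = Dρ(ζ)(h)` for all `h`. Then `v_ρ` is a quaternion boundary distinguishing
map for `U`: for each `ζ` in the frontier of `U` and each `z ∈ U`, the quaternion
`⟨v_ρ(ζ); ζ − z⟩` is nonzero; in fact its real part is strictly positive. -/
theorem gradient_is_boundary_distinguishing {n : ℕ}
    (ρ : (Fin n → Quaternion ℝ) → ℝ) (hρ : ContDiff ℝ 2 ρ)
    (ε₀ : ℝ) (hε₀ : 0 < ε₀)
    (hconv : ∀ x h : Fin n → Quaternion ℝ,
      ε₀ * ∑ l, ‖h l‖ ^ 2 ≤ fderiv ℝ (fderiv ℝ ρ) x h h)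
    (v : (Fin n → Quaternion ℝ) → (Fin n → Quaternion ℝ))
    (hv : ∀ ζ h : Fin n → Quaternion ℝ, (qip (v ζ) h).re = fderiv ℝ ρ ζ h)
    (U : Set (Fin n → Quaternion ℝ)) (hU : U = {z | ρ z < 0}) :
    ∀ ζ ∈ frontier U, ∀ z ∈ U,
      qip (v ζ) (ζ - z) ≠ 0 ∧ 0 < (qip (v ζ) (ζ - z)).re := by
  intro ζ hζ z hz
  have hρz : ρ z < 0 := by rw [hU] at hz; exact hz
  have hUopen : IsOpen U := by
    rw [hU]; exact isOpen_lt hρ.continuous continuous_const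
  have hζnot : ζ ∉ U := by
    intro hmem
    have := hUopen.frontier_eq ▸ hζ
    exact this.2 hmem
  have hρζ : 0 ≤ ρ ζ := by
    by_contra hlt
    exact hζnot (by rw [hU]; exact lt_of_not_ge hlt)
  set h : Fin n → Quaternion ℝ := z - ζ with hh
  set γ : ℝ → (Fin n → Quaternion ℝ) := fun t => ζ + t • h with hγ
  have hγd : ∀ t : ℝ, HasDerivAt γ h t := by
    intro t
    have := ((hasDerivAt_id t).smul_const h).const_add ζ
    simpa [hγ] using this
  have hρd : Differentiable ℝ ρ := hρ.differentiable (by norm_num)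
  have hg' : ∀ t, HasDerivAt (fun s => ρ (γ s)) (fderiv ℝ ρ (γ t) h) t := fun t =>
    (hρd (γ t)).hasFDerivAt.comp_hasDerivAt t (hγd t)
  have hF : ContDiff ℝ 1 (fderiv ℝ ρ) := hρ.fderiv_right (by norm_num)
  have hFd : Differentiable ℝ (fderiv ℝ ρ) := hF.differentiable one_ne_zero
  have hg'' : ∀ t, HasDerivAt (fun s => fderiv ℝ ρ (γ s) h)
      (fderiv ℝ (fderiv ℝ ρ) (γ t) h h) t := by
    intro t
    have h1 : HasDerivAt (fun s => fderiv ℝ ρ (γ s)) (fderiv ℝ (fderiv ℝ ρ) (γ t) h) t :=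
      HasFDerivAt.comp_hasDerivAt (l := fderiv ℝ ρ) t (hFd (γ t)).hasFDerivAt (hγd t)
    simpa using h1.clm_apply (hasDerivAt_const t h)
  have hmono : Monotone (fun t => fderiv ℝ ρ (γ t) h) := by
    apply monotone_of_deriv_nonneg
    · exact fun t => (hg'' t).differentiableAt
    · intro t
      rw [(hg'' t).deriv]
      have h1 := hconv (γ t) h
      have h2 : 0 ≤ ε₀ * ∑ l, ‖h l‖ ^ 2 :=
        mul_nonneg hε₀.le (Finset.sum_nonneg fun _ _ => sq_nonneg _)
      linarith
  obtain ⟨c, hc, hceq⟩ := exists_hasDerivAt_eq_slope (fun s => ρ (γ s))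
      (fun t => fderiv ℝ ρ (γ t) h) one_pos
      (fun t _ => (hg' t).continuousAt.continuousWithinAt)
      (fun t _ => hg' t)
  have h0 : γ 0 = ζ := by simp [hγ]
  have h1 : γ 1 = z := by simp [hγ, hh]
  have key : fderiv ℝ ρ ζ h ≤ ρ z - ρ ζ := by
    have hle := hmono (le_of_lt hc.1)
    simp only [hceq, h0, h1] at hle
    linarith
  have hre : 0 < (qip (v ζ) (ζ - z)).re := by
    rw [hv]
    have hneg : ζ - z = -h := by rw [hh]; abel
    rw [hneg, map_neg]
    linarith
  exact ⟨fun hzero => by simp [hzero, Quaternion.re_zero] at hre, hre⟩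
end
end
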